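/- Let A ∈ SL₃(ℤ) with A³ = I and A ≠ I. Then for every prime p, the reduction of A modulo p is not the identity matrix in SL₃(ℤ/pℤ). -/

import Mathlib

theorem stmt_13 (A : Matrix.SpecialLinearGroup (Fin 3) ℤ)
    (hA : A ^ 3 = 1) (hA1 : A ≠ 1) (p : ℕ) (hp : p.Prime) :
    Matrix.SpecialLinearGroup.map (Int.castRingHom (ZMod p)) A ≠ 1 := by
  intro h
  set M : Matrix (Fin 3) (Fin 3) ℤ := (A : Matrix (Fin 3) (Fin 3) ℤ) - 1 with hMdef
  -- p divides every entry of M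
  have hdvd1 : ∀ i j, (p : ℤ) ∣ M i j := by
    intro i j
    have hc := congrArg (fun B : Matrix.SpecialLinearGroup (Fin 3) (ZMod p) =>
      (B : Matrix (Fin 3) (Fin 3) (ZMod p)) i j) h
    simp only [Matrix.SpecialLinearGroup.map_apply_coe, RingHom.mapMatrix_apply,
      Matrix.map_apply, Int.coe_castRingHom, Matrix.SpecialLinearGroup.coe_one] at hc
    rw [← ZMod.intCast_zmod_eq_zero_iff_dvd]
    push_cast [hMdef, Matrix.sub_apply]
    rw [hc]
    by_cases hij : i = j <;> simp [hij, Matrix.one_apply]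
  -- the cube equation
  have hA3 : ((A : Matrix (Fin 3) (Fin 3) ℤ)) ^ 3 = 1 := by
    have := congrArg (fun B : Matrix.SpecialLinearGroup (Fin 3) ℤ =>
      (B : Matrix (Fin 3) (Fin 3) ℤ)) hA
    simpa using this
  have hcube : (3 : ℤ) • M + (3 : ℤ) • M ^ 2 + M ^ 3 = 0 := by
    have h1 : (1 + M) ^ 3 = 1 := by
      rw [hMdef, add_sub_cancel, hA3]
    have expand : (1 + M) ^ 3 = 1 + ((3:ℤ) • M + (3:ℤ) • M ^ 2 + M ^ 3) := by
      noncomm_ring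
    rw [expand] at h1
    exact add_left_cancel (a := (1 : Matrix (Fin 3) (Fin 3) ℤ)) (by rw [h1, add_zero])
  -- descent: every power of p divides every entry of M
  have key : ∀ k : ℕ, ∀ i j, (p : ℤ) ^ (k + 1) ∣ M i j := by
    intro k
    induction k with
    | zero => simpa using hdvd1
    | succ k ih =>
      -- divisibility of entries of M^2 and M^3
      have hsq : ∀ i j, (p : ℤ) ^ (2 * (k + 1)) ∣ (M ^ 2) i j := by
        intro i j
        rw [pow_two, Matrix.mul_apply]
        refine Finset.dvd_sum fun l _ => ?_
        rw [two_mul, pow_add]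
        exact mul_dvd_mul (ih i l) (ih l j)
      have hcu : ∀ i j, (p : ℤ) ^ (3 * (k + 1)) ∣ (M ^ 3) i j := by
        intro i j
        rw [show M ^ 3 = M ^ 2 * M by rw [pow_succ], Matrix.mul_apply]
        refine Finset.dvd_sum fun l _ => ?_
        rw [show 3 * (k + 1) = 2 * (k + 1) + (k + 1) by ring, pow_add]
        exact mul_dvd_mul (hsq i l) (ih l j)
      intro i j
      have heq : (3 : ℤ) * M i j = -((3 : ℤ) * (M ^ 2) i j + (M ^ 3) i j) := by
        have := congrFun (congrFun hcube i) j
        simp only [Matrix.add_apply, Matrix.smul_apply, Matrix.zero_apply,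
          smul_eq_mul] at this
        linarith
      by_cases h3 : p = 3
      · subst h3
        -- show 3^(k+3) ∣ 3 * M i j
        have hd : (3 : ℤ) ^ (k + 3) ∣ (3 : ℤ) * M i j := by
          rw [heq]
          refine dvd_neg.mpr (dvd_add ?_ ?_)
          · have : (3 : ℤ) ^ (k + 3) ∣ (3:ℤ) ^ (1 + 2 * (k + 1)) := by
              exact pow_dvd_pow _ (by omega)
            refine this.trans ?_
            rw [pow_add, pow_one]
            exact mul_dvd_mul_left 3 (by exact_mod_cast hsq i j)
          · refine (pow_dvd_pow (3:ℤ) (by omega : k + 3 ≤ 3 * (k + 1))).trans ?_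
            exact_mod_cast hcu i j
        have : (3 : ℤ) * (3 : ℤ) ^ (k + 2) ∣ (3 : ℤ) * M i j := by
          rw [show (3:ℤ) * (3:ℤ) ^ (k + 2) = (3:ℤ) ^ (k + 3) by ring]
          exact hd
        have := (mul_dvd_mul_iff_left (by norm_num : (3:ℤ) ≠ 0)).mp this
        exact_mod_cast this
      · -- p ≠ 3
        have hd : (p : ℤ) ^ (k + 2) ∣ (3 : ℤ) * M i j := by
          rw [heq]
          refine dvd_neg.mpr (dvd_add ?_ ?_)
          · exact Dvd.dvd.mul_left
              ((pow_dvd_pow (p:ℤ) (by omega : k + 2 ≤ 2 * (k + 1))).trans (hsq i j)) 3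
          · exact (pow_dvd_pow (p:ℤ) (by omega : k + 2 ≤ 3 * (k + 1))).trans (hcu i j)
        have hc : IsCoprime ((p : ℤ) ^ (k + 2)) 3 := by
          refine IsCoprime.pow_left ?_
          rw [show (3:ℤ) = ((3:ℕ):ℤ) by norm_num, Int.isCoprime_iff_gcd_eq_one,
            Int.gcd_natCast_natCast]
          exact (Nat.coprime_primes hp Nat.prime_three).mpr h3
        exact hc.dvd_of_dvd_mul_left hd
  -- conclude M = 0
  have hM0 : M = 0 := by
    ext i j
    have hx : ∀ k : ℕ, (p : ℤ) ^ (k + 1) ∣ M i j := fun k => key k i j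
    set x := M i j with hxdef
    by_contra hne
    have hlt : |x| < (p : ℤ) ^ (x.natAbs + 1) := by
      have h1 : x.natAbs < p ^ (x.natAbs + 1) := by
        calc x.natAbs < x.natAbs + 1 := Nat.lt_succ_self _
          _ ≤ p ^ (x.natAbs + 1) := (Nat.lt_pow_self hp.one_lt).le
      rw [Int.abs_eq_natAbs]
      exact_mod_cast h1
    have := Int.eq_zero_of_abs_lt_dvd (hx x.natAbs) hlt
    exact hne (by simpa using this)
  apply hA1
  apply Subtype.ext
  have : (A : Matrix (Fin 3) (Fin 3) ℤ) - 1 = 0 := hM0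
  simpa [sub_eq_zero] using this
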